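/- Let μ : A → −A be a continuous bijection, where A is the closed arc of the unit circle from (1,0) to (0,1) in the first quadrant and −A its antipodal arc, with μ(1,0) = (−1,0). Then μ extends uniquely to a continuous fixed-point-free involution σ of S¹ commuting with the reflection in the z-axis. -/

import Mathlib

open Complex

/-- The closed first-quadrant arc of the unit circle, from `(1,0)` to `(0,1)`. -/
def arcA : Set Circle := {p : Circle | 0 ≤ (p : ℂ).re ∧ 0 ≤ (p : ℂ).im}

/-- The antipodal arc `-A`, from `(-1,0)` to `(0,-1)`. -/
def arcNegA : Set Circle := {p : Circle | (p : ℂ).re ≤ 0 ∧ (p : ℂ).im ≤ 0}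

/-- The reflection of the circle in the `z`-axis (the imaginary axis),
`(x, z) ↦ (-x, z)`. -/
noncomputable def rho (p : Circle) : Circle :=
  ⟨-(starRingEnd ℂ) p, by
    have := p.2
    simp only [Submonoid.unitSphere, Submonoid.mem_mk] at *
    simpa using this⟩

/-- The point `(1,0)` of the circle. -/
noncomputable def ptOne : Circle := ⟨1, by simp [Submonoid.unitSphere]⟩

/-- The point `(-1,0)` of the circle. -/
noncomputable def ptNegOne : Circle := ⟨-1, by simp [Submonoid.unitSphere]⟩

/-! ### Auxiliary definitions and lemmas -/

open Real Set

/-- The point `(0,1)` of the circle. -/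
noncomputable def ptI : Circle := ⟨I, by simp [Submonoid.unitSphere]⟩

/-- The point `(0,-1)` of the circle. -/
noncomputable def ptNegI : Circle := ⟨-I, by simp [Submonoid.unitSphere]⟩

/-- The second-quadrant arc. -/
def arcB : Set Circle := {p : Circle | (p : ℂ).re ≤ 0 ∧ 0 ≤ (p : ℂ).im}

/-- The fourth-quadrant arc. -/
def arcNegB : Set Circle := {p : Circle | 0 ≤ (p : ℂ).re ∧ (p : ℂ).im ≤ 0}

lemma circle_sq (p : Circle) : (p : ℂ).re ^ 2 + (p : ℂ).im ^ 2 = 1 := by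
  have h := p.norm_coe
  have h2 := Complex.sq_norm (p : ℂ)
  rw [h, Complex.normSq_apply] at h2
  nlinarith

lemma coe_rho (p : Circle) : (rho p : ℂ) = -((starRingEnd ℂ) (p : ℂ)) := rfl

lemma rho_re (p : Circle) : (rho p : ℂ).re = -(p : ℂ).re := by simp [coe_rho]

lemma rho_im (p : Circle) : (rho p : ℂ).im = (p : ℂ).im := by simp [coe_rho]

lemma rho_rho (p : Circle) : rho (rho p) = p := by
  apply Subtype.ext
  simp [coe_rho]

lemma continuous_rho : Continuous rho := by
  apply Continuous.subtype_mk
  exact (Complex.continuous_conj.comp continuous_subtype_val).neg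

lemma coe_ptOne : (ptOne : ℂ) = 1 := rfl
lemma coe_ptNegOne : (ptNegOne : ℂ) = -1 := rfl
lemma coe_ptI : (ptI : ℂ) = I := rfl
lemma coe_ptNegI : (ptNegI : ℂ) = -I := rfl

lemma rho_ptOne : rho ptOne = ptNegOne := by apply Subtype.ext; simp [coe_rho, coe_ptOne, coe_ptNegOne]
lemma rho_ptNegOne : rho ptNegOne = ptOne := by apply Subtype.ext; simp [coe_rho, coe_ptOne, coe_ptNegOne]
lemma rho_ptI : rho ptI = ptI := by apply Subtype.ext; simp [coe_rho, coe_ptI]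
lemma rho_ptNegI : rho ptNegI = ptNegI := by apply Subtype.ext; simp [coe_rho, coe_ptNegI]

lemma eq_ptI {p : Circle} (h0 : (p : ℂ).re = 0) (h1 : 0 ≤ (p : ℂ).im) : p = ptI := by
  have hs := circle_sq p
  apply Subtype.ext
  apply Complex.ext
  · simp [coe_ptI, h0]
  · simp only [coe_ptI, Complex.I_im]
    nlinarith

lemma eq_ptNegI {p : Circle} (h0 : (p : ℂ).re = 0) (h1 : (p : ℂ).im ≤ 0) : p = ptNegI := by
  have hs := circle_sq p
  apply Subtype.ext
  apply Complex.ext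
  · simp [coe_ptNegI, h0]
  · simp only [coe_ptNegI, Complex.neg_im, Complex.I_im]
    nlinarith

lemma eq_ptOne {p : Circle} (h0 : (p : ℂ).im = 0) (h1 : 0 ≤ (p : ℂ).re) : p = ptOne := by
  have hs := circle_sq p
  apply Subtype.ext
  apply Complex.ext
  · simp only [coe_ptOne, Complex.one_re]
    nlinarith
  · simp [coe_ptOne, h0]

lemma eq_ptNegOne {p : Circle} (h0 : (p : ℂ).im = 0) (h1 : (p : ℂ).re ≤ 0) : p = ptNegOne := by
  have hs := circle_sq p
  apply Subtype.ext
  apply Complex.ext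
  · simp only [coe_ptNegOne, Complex.neg_re, Complex.one_re]
    nlinarith
  · simp [coe_ptNegOne, h0]

lemma isClosed_re_le : IsClosed {p : Circle | (p : ℂ).re ≤ 0} :=
  isClosed_le (Complex.continuous_re.comp continuous_subtype_val) continuous_const

lemma isClosed_re_ge : IsClosed {p : Circle | 0 ≤ (p : ℂ).re} :=
  isClosed_le continuous_const (Complex.continuous_re.comp continuous_subtype_val)

lemma isClosed_im_le : IsClosed {p : Circle | (p : ℂ).im ≤ 0} :=
  isClosed_le (Complex.continuous_im.comp continuous_subtype_val) continuous_const

lemma isClosed_im_ge : IsClosed {p : Circle | 0 ≤ (p : ℂ).im} :=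
  isClosed_le continuous_const (Complex.continuous_im.comp continuous_subtype_val)

lemma isClosed_arcA : IsClosed arcA := isClosed_re_ge.inter isClosed_im_ge
lemma isClosed_arcB : IsClosed arcB := isClosed_re_le.inter isClosed_im_ge
lemma isClosed_arcNegA : IsClosed arcNegA := isClosed_re_le.inter isClosed_im_le
lemma isClosed_arcNegB : IsClosed arcNegB := isClosed_re_ge.inter isClosed_im_le

lemma rho_mem_arcA {p : Circle} (hp : p ∈ arcB) : rho p ∈ arcA :=
  ⟨by rw [rho_re]; linarith [hp.1], by rw [rho_im]; exact hp.2⟩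

lemma rho_mem_arcB {p : Circle} (hp : p ∈ arcA) : rho p ∈ arcB :=
  ⟨by rw [rho_re]; linarith [hp.1], by rw [rho_im]; exact hp.2⟩

lemma rho_mem_arcNegA {p : Circle} (hp : p ∈ arcNegB) : rho p ∈ arcNegA :=
  ⟨by rw [rho_re]; linarith [hp.1], by rw [rho_im]; exact hp.2⟩

lemma rho_mem_arcNegB {p : Circle} (hp : p ∈ arcNegA) : rho p ∈ arcNegB :=
  ⟨by rw [rho_re]; linarith [hp.1], by rw [rho_im]; exact hp.2⟩

lemma cover (p : Circle) : p ∈ arcA ∨ p ∈ arcB ∨ p ∈ arcNegA ∨ p ∈ arcNegB := by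
  rcases le_total 0 (p : ℂ).re with hre | hre <;> rcases le_total 0 (p : ℂ).im with him | him
  · exact Or.inl ⟨hre, him⟩
  · exact Or.inr (Or.inr (Or.inr ⟨hre, him⟩))
  · exact Or.inr (Or.inl ⟨hre, him⟩)
  · exact Or.inr (Or.inr (Or.inl ⟨hre, him⟩))

lemma not_mem_both {p : Circle} (h1 : p ∈ arcA) (h2 : p ∈ arcNegA) : False := by
  have hre : (p : ℂ).re = 0 := le_antisymm h2.1 h1.1
  have him : (p : ℂ).im = 0 := le_antisymm h2.2 h1.2
  have := circle_sq p
  rw [hre, him] at this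
  norm_num at this

lemma not_mem_bothB {p : Circle} (h1 : p ∈ arcB) (h2 : p ∈ arcNegB) : False := by
  have hre : (p : ℂ).re = 0 := le_antisymm h1.1 h2.1
  have him : (p : ℂ).im = 0 := le_antisymm h2.2 h1.2
  have := circle_sq p
  rw [hre, him] at this
  norm_num at this

lemma circleExp_re (t : ℝ) : (Circle.exp t : ℂ).re = Real.cos t := by
  simp [Circle.coe_exp, Complex.exp_mul_I, Complex.cos_ofReal_re, Complex.sin_ofReal_re]

lemma circleExp_im (t : ℝ) : (Circle.exp t : ℂ).im = Real.sin t := by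
  simp [Circle.coe_exp, Complex.exp_mul_I, Complex.cos_ofReal_re, Complex.sin_ofReal_re]

lemma exp_zero_eq : Circle.exp 0 = ptOne := by
  apply Subtype.ext
  simp [Circle.coe_exp, coe_ptOne]

lemma exp_pi_div_two : Circle.exp (π / 2) = ptI := by
  apply Subtype.ext
  simp [Circle.coe_exp, Complex.exp_mul_I, coe_ptI]

lemma exp_mem_arcA {t : ℝ} (ht : t ∈ Icc (0:ℝ) (π/2)) : Circle.exp t ∈ arcA := by
  constructor
  · rw [circleExp_re]
    apply Real.cos_nonneg_of_mem_Icc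
    constructor <;> [linarith [ht.1, Real.pi_pos]; exact ht.2]
  · rw [circleExp_im]
    apply Real.sin_nonneg_of_nonneg_of_le_pi ht.1
    linarith [ht.2, Real.pi_pos]

lemma arg_neg_mem {q : Circle} (hq : q ∈ arcNegA) : arg (-(q : ℂ)) ∈ Icc (0:ℝ) (π/2) := by
  constructor
  · rw [Complex.arg_nonneg_iff]
    simp only [Complex.neg_im]
    linarith [hq.2]
  · rw [Complex.arg_le_pi_div_two_iff]
    left
    simp only [Complex.neg_re]
    linarith [hq.1]

lemma arg_mem_of_arcA {p : Circle} (hp : p ∈ arcA) : arg (p : ℂ) ∈ Icc (0:ℝ) (π/2) := by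
  constructor
  · rw [Complex.arg_nonneg_iff]; exact hp.2
  · rw [Complex.arg_le_pi_div_two_iff]; exact Or.inl hp.1

lemma neg_slitPlane {q : Circle} (hq : q ∈ arcNegA) : (0:ℝ) < (-(q:ℂ)).re ∨ (-(q:ℂ)).im ≠ 0 := by
  rcases lt_or_eq_of_le hq.1 with h | h
  · left; simp only [Complex.neg_re]; linarith
  · right
    intro h0
    have him : (q : ℂ).im = 0 := by simpa using h0
    have hs := circle_sq q
    rw [h, him] at hs
    norm_num at hs

/-- The key rigidity fact: `μ` must send `(0,1)` to `(0,-1)`. -/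
lemma mu_ptI (μ : Circle → Circle) (hcont : ContinuousOn μ arcA) (hbij : Set.BijOn μ arcA arcNegA)
    (hone : μ ptOne = ptNegOne) : μ ptI = ptNegI := by
  have hpi : (0:ℝ) < π := Real.pi_pos
  set f : ℝ → ℝ := fun t => arg (-(μ (Circle.exp t) : ℂ)) with hf
  -- f maps [0,π/2] into [0,π/2]
  have hfmem : ∀ t ∈ Icc (0:ℝ) (π/2), f t ∈ Icc (0:ℝ) (π/2) := fun t ht =>
    arg_neg_mem (hbij.mapsTo (exp_mem_arcA ht))
  -- continuity
  have hμexp : ContinuousOn (fun t => μ (Circle.exp t)) (Icc (0:ℝ) (π/2)) :=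
    hcont.comp Circle.exp.continuous.continuousOn fun t ht => exp_mem_arcA ht
  have hfc : ContinuousOn f (Icc (0:ℝ) (π/2)) := by
    intro t ht
    have h1 : ContinuousWithinAt (fun t => -(μ (Circle.exp t) : ℂ)) (Icc (0:ℝ) (π/2)) t :=
      (continuous_subtype_val.continuousAt.comp_continuousWithinAt (hμexp t ht)).neg
    exact ContinuousAt.comp_continuousWithinAt (f := fun t => -((μ (Circle.exp t) : ℂ)))
      (Complex.continuousAt_arg (neg_slitPlane (hbij.mapsTo (exp_mem_arcA ht)))) h1
  -- injectivity
  have hfi : InjOn f (Icc (0:ℝ) (π/2)) := by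
    intro t1 h1 t2 h2 heq
    have habs : ‖(-(μ (Circle.exp t1) : ℂ))‖ = ‖(-(μ (Circle.exp t2) : ℂ))‖ := by
      simp [Circle.norm_coe]
    have := Complex.ext_norm_arg habs heq
    have hμeq : μ (Circle.exp t1) = μ (Circle.exp t2) := Subtype.ext (by
      have := neg_injective this; exact_mod_cast this)
    have hexp : Circle.exp t1 = Circle.exp t2 :=
      hbij.injOn (exp_mem_arcA h1) (exp_mem_arcA h2) hμeq
    have a1 : Complex.arg ((Circle.exp t1 : ℂ)) = t1 :=
      Circle.arg_exp (by linarith [h1.1]) (by linarith [h1.2])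
    have a2 : Complex.arg ((Circle.exp t2 : ℂ)) = t2 :=
      Circle.arg_exp (by linarith [h2.1]) (by linarith [h2.2])
    rw [← a1, ← a2, hexp]
  -- endpoint values
  have hf0 : f 0 = 0 := by
    rw [hf]
    simp only [exp_zero_eq, hone, coe_ptNegOne, neg_neg]
    exact Complex.arg_one
  have hmono : StrictMonoOn f (Icc (0:ℝ) (π/2)) := by
    apply ContinuousOn.strictMonoOn_of_injOn_Icc (by linarith) _ hfc hfi
    rw [hf0]
    exact (hfmem (π/2) ⟨by linarith, le_refl _⟩).1
  -- surjectivity onto π/2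
  obtain ⟨p, hp, hμp⟩ := hbij.surjOn (⟨le_of_eq (by simp [coe_ptNegI]), by simp [coe_ptNegI]⟩ :
    ptNegI ∈ arcNegA)
  have hargp := arg_mem_of_arcA hp
  have hexpargp : Circle.exp (Complex.arg (p : ℂ)) = p := Circle.exp_arg p
  have hfval : f (Complex.arg (p : ℂ)) = π / 2 := by
    rw [hf]
    simp only [hexpargp, hμp, coe_ptNegI, neg_neg]
    exact Complex.arg_I
  have harg_eq : Complex.arg (p : ℂ) = π / 2 := by
    by_contra hne
    have hlt : Complex.arg (p : ℂ) < π / 2 := lt_of_le_of_ne hargp.2 hne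
    have := hmono hargp ⟨by linarith, le_refl _⟩ hlt
    rw [hfval] at this
    exact absurd (hfmem (π/2) ⟨by linarith, le_refl _⟩).2 (not_le.mpr this)
  have hfpi2 : f (π/2) = π/2 := harg_eq ▸ hfval
  -- conclude
  have : arg (-(μ ptI : ℂ)) = π / 2 := by
    rw [← exp_pi_div_two]
    exact hfpi2
  have habs : ‖(-(μ ptI : ℂ))‖ = ‖I‖ := by simp [Circle.norm_coe]
  have : -(μ ptI : ℂ) = I := Complex.ext_norm_arg habs (by rw [this, Complex.arg_I])
  apply Subtype.ext
  rw [coe_ptNegI]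
  linear_combination -this

/-- A continuous bijection `μ : A → -A` of the first-quadrant arc onto its antipodal
arc with `μ(1,0) = (-1,0)` extends uniquely to a continuous fixed-point-free
involution of the circle commuting with the reflection in the `z`-axis. -/
theorem extend_arc_map_to_involution
    (μ : Circle → Circle) (hcont : ContinuousOn μ arcA) (hbij : Set.BijOn μ arcA arcNegA)
    (hone : μ ptOne = ptNegOne) :
    ∃! σ : Circle → Circle,
      Continuous σ ∧ (∀ p ∈ arcA, σ p = μ p) ∧ (∀ p, σ (σ p) = p) ∧
      (∀ p, σ p ≠ p) ∧ (∀ p, σ (rho p) = rho (σ p)) := by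
  classical
  have hI : μ ptI = ptNegI := mu_ptI μ hcont hbij hone
  have hOneA : ptOne ∈ arcA := ⟨by simp [coe_ptOne], by simp [coe_ptOne]⟩
  have hIA : ptI ∈ arcA := ⟨by simp [coe_ptI], by simp [coe_ptI]⟩
  -- the inverse map
  have hAcpt : IsCompact arcA := isClosed_arcA.isCompact
  have : CompactSpace arcA := isCompact_iff_compactSpace.mp hAcpt
  let E : arcA ≃ arcNegA := hbij.equiv μ
  have hEcoe : ∀ x : arcA, (E x : Circle) = μ x := fun x => rfl
  have hEcont : Continuous E := by
    rw [continuous_induced_rng]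
    exact hcont.comp_continuous continuous_subtype_val fun x => x.2
  let H : arcA ≃ₜ arcNegA := Continuous.homeoOfEquivCompactToT2 (f := E) hEcont
  have hHcoe : ∀ x : arcA, (H x : Circle) = μ x := fun x => rfl
  let ν : Circle → Circle := fun q => if h : q ∈ arcNegA then (H.symm ⟨q, h⟩ : Circle) else ptOne
  have hν : ∀ q (h : q ∈ arcNegA), ν q = (H.symm ⟨q, h⟩ : Circle) := fun q h => dif_pos h
  have hνmem : ∀ q ∈ arcNegA, ν q ∈ arcA := by
    intro q h
    rw [hν q h]
    exact (H.symm ⟨q, h⟩).2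
  have hνμ : ∀ p ∈ arcA, ν (μ p) = p := by
    intro p hp
    rw [hν (μ p) (hbij.mapsTo hp)]
    have : (⟨μ p, hbij.mapsTo hp⟩ : arcNegA) = H ⟨p, hp⟩ := Subtype.ext (hHcoe ⟨p, hp⟩).symm
    rw [this, H.symm_apply_apply]
  have hμν : ∀ q ∈ arcNegA, μ (ν q) = q := by
    intro q h
    rw [hν q h, ← hHcoe (H.symm ⟨q, h⟩), H.apply_symm_apply]
  have hνcont : ContinuousOn ν arcNegA := by
    rw [continuousOn_iff_continuous_restrict]
    have heq : arcNegA.domRestrict ν = fun q : arcNegA => (H.symm q : Circle) := by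
      funext q
      simp only [Set.domRestrict_apply, hν q q.2]
    rw [heq]
    exact continuous_subtype_val.comp H.symm.continuous
  have hνI : ν ptNegI = ptI := by rw [← hI, hνμ ptI hIA]
  have hνOne : ν ptNegOne = ptOne := by rw [← hone, hνμ ptOne hOneA]
  -- the involution
  set σ : Circle → Circle := fun p =>
    if 0 ≤ (p : ℂ).im then
      (if 0 ≤ (p : ℂ).re then μ p else rho (μ (rho p)))
    else
      (if (p : ℂ).re ≤ 0 then ν p else rho (ν (rho p))) with hσdef
  -- values on the four arcs
  have hσ1 : ∀ p ∈ arcA, σ p = μ p := by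
    intro p hp
    simp only [hσdef, if_pos hp.2, if_pos hp.1]
  have hσ2 : ∀ p ∈ arcB, σ p = rho (μ (rho p)) := by
    intro p hp
    by_cases hre : 0 ≤ (p : ℂ).re
    · have hp0 : p = ptI := eq_ptI (le_antisymm hp.1 hre) hp.2
      subst hp0
      rw [hσ1 ptI hIA, rho_ptI, hI, rho_ptNegI]
    · simp only [hσdef, if_pos hp.2, if_neg hre]
  have hσ3 : ∀ p ∈ arcNegA, σ p = ν p := by
    intro p hp
    by_cases him : 0 ≤ (p : ℂ).im
    · have hp0 : p = ptNegOne := eq_ptNegOne (le_antisymm hp.2 him) hp.1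
      subst hp0
      have hmem : ptNegOne ∈ arcB := ⟨by simp [coe_ptNegOne], by simp [coe_ptNegOne]⟩
      rw [hσ2 ptNegOne hmem, rho_ptNegOne, hone, rho_ptNegOne, hνOne]
    · simp only [hσdef, if_neg him, if_pos hp.1]
  have hσ4 : ∀ p ∈ arcNegB, σ p = rho (ν (rho p)) := by
    intro p hp
    by_cases him : 0 ≤ (p : ℂ).im
    · have hp0 : p = ptOne := eq_ptOne (le_antisymm hp.2 him) hp.1
      subst hp0
      rw [hσ1 ptOne hOneA, hone, rho_ptOne, hνOne, rho_ptOne]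
    · by_cases hre : (p : ℂ).re ≤ 0
      · have hp0 : p = ptNegI := eq_ptNegI (le_antisymm hre hp.1) hp.2
        subst hp0
        have hmem : ptNegI ∈ arcNegA := ⟨by simp [coe_ptNegI], by simp [coe_ptNegI]⟩
        rw [hσ3 ptNegI hmem, hνI, rho_ptNegI, hνI, rho_ptI]
      · simp only [hσdef, if_neg him, if_neg hre]
  -- where σ sends each arc
  have hm1 : ∀ p ∈ arcA, σ p ∈ arcNegA := fun p hp => (hσ1 p hp) ▸ hbij.mapsTo hp
  have hm2 : ∀ p ∈ arcB, σ p ∈ arcNegB := fun p hp =>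
    (hσ2 p hp) ▸ rho_mem_arcNegB (hbij.mapsTo (rho_mem_arcA hp))
  have hm3 : ∀ p ∈ arcNegA, σ p ∈ arcA := fun p hp => (hσ3 p hp) ▸ hνmem p hp
  have hm4 : ∀ p ∈ arcNegB, σ p ∈ arcB := fun p hp =>
    (hσ4 p hp) ▸ rho_mem_arcB (hνmem _ (rho_mem_arcNegA hp))
  -- continuity
  have hc1 : ContinuousOn σ arcA := hcont.congr hσ1
  have hc2 : ContinuousOn σ arcB := by
    refine ContinuousOn.congr ?_ hσ2
    exact continuous_rho.comp_continuousOn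
      (hcont.comp continuous_rho.continuousOn fun p hp => rho_mem_arcA hp)
  have hc3 : ContinuousOn σ arcNegA := hνcont.congr hσ3
  have hc4 : ContinuousOn σ arcNegB := by
    refine ContinuousOn.congr ?_ hσ4
    exact continuous_rho.comp_continuousOn
      (hνcont.comp continuous_rho.continuousOn fun p hp => rho_mem_arcNegA hp)
  have hσcont : Continuous σ := by
    rw [continuous_iff_isClosed]
    intro C hC
    have hcover : σ ⁻¹' C =
        (arcA ∩ σ ⁻¹' C) ∪ (arcB ∩ σ ⁻¹' C) ∪ (arcNegA ∩ σ ⁻¹' C) ∪ (arcNegB ∩ σ ⁻¹' C) := by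
      ext p
      constructor
      · intro hp
        rcases cover p with h | h | h | h
        · exact Or.inl (Or.inl (Or.inl ⟨h, hp⟩))
        · exact Or.inl (Or.inl (Or.inr ⟨h, hp⟩))
        · exact Or.inl (Or.inr ⟨h, hp⟩)
        · exact Or.inr ⟨h, hp⟩
      · rintro (((⟨_, hp⟩ | ⟨_, hp⟩) | ⟨_, hp⟩) | ⟨_, hp⟩) <;> exact hp
    rw [hcover]
    exact (((hc1.preimage_isClosed_of_isClosed isClosed_arcA hC).union
      (hc2.preimage_isClosed_of_isClosed isClosed_arcB hC)).union
      (hc3.preimage_isClosed_of_isClosed isClosed_arcNegA hC)).union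
      (hc4.preimage_isClosed_of_isClosed isClosed_arcNegB hC)
  -- involution
  have hinv : ∀ p, σ (σ p) = p := by
    intro p
    rcases cover p with h | h | h | h
    · rw [hσ1 p h, hσ3 _ (hbij.mapsTo h), hνμ p h]
    · rw [hσ2 p h, hσ4 _ (rho_mem_arcNegB (hbij.mapsTo (rho_mem_arcA h))), rho_rho,
        hνμ _ (rho_mem_arcA h), rho_rho]
    · rw [hσ3 p h, hσ1 _ (hνmem p h), hμν p h]
    · rw [hσ4 p h, hσ2 _ (rho_mem_arcB (hνmem _ (rho_mem_arcNegA h))), rho_rho,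
        hμν _ (rho_mem_arcNegA h), rho_rho]
  -- no fixed points
  have hfix : ∀ p, σ p ≠ p := by
    intro p hp
    rcases cover p with h | h | h | h
    · exact not_mem_both h (hp ▸ hm1 p h)
    · exact not_mem_bothB h (hp ▸ hm2 p h)
    · exact not_mem_both (hp ▸ hm3 p h) h
    · exact not_mem_bothB (hp ▸ hm4 p h) h
  -- commutes with rho
  have hcomm : ∀ p, σ (rho p) = rho (σ p) := by
    intro p
    rcases cover p with h | h | h | h
    · rw [hσ2 _ (rho_mem_arcB h), rho_rho, hσ1 p h]
    · rw [hσ1 _ (rho_mem_arcA h), hσ2 p h, rho_rho]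
    · rw [hσ4 _ (rho_mem_arcNegB h), rho_rho, hσ3 p h]
    · rw [hσ3 _ (rho_mem_arcNegA h), hσ4 p h, rho_rho]
  refine ⟨σ, ⟨hσcont, hσ1, hinv, hfix, hcomm⟩, ?_⟩
  -- uniqueness
  rintro τ ⟨-, hτ1, hτinv, -, hτcomm⟩
  funext p
  have key : ∀ q ∈ arcA, τ q = σ q ∧ τ (rho q) = σ (rho q) ∧ τ (μ q) = σ (μ q) ∧
      τ (rho (μ q)) = σ (rho (μ q)) := by
    intro q hq
    have e1 : τ q = σ q := by rw [hτ1 q hq, hσ1 q hq]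
    have e2 : τ (rho q) = σ (rho q) := by
      have := hτcomm q
      rw [this, e1, ← hcomm q]
    have e3 : τ (μ q) = σ (μ q) := by
      have : τ (μ q) = q := by rw [← hτ1 q hq, hτinv q]
      rw [this, hσ3 _ (hbij.mapsTo hq), hνμ q hq]
    have e4 : τ (rho (μ q)) = σ (rho (μ q)) := by
      rw [hτcomm (μ q), e3, ← hcomm (μ q)]
    exact ⟨e1, e2, e3, e4⟩
  rcases cover p with h | h | h | h
  · exact (key p h).1
  · have h' : rho p ∈ arcA := rho_mem_arcA h
    have := (key (rho p) h').2.1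
    rwa [rho_rho] at this
  · obtain ⟨q, hq, rfl⟩ := hbij.surjOn h
    exact (key q hq).2.2.1
  · have h' : rho p ∈ arcNegA := rho_mem_arcNegA h
    obtain ⟨q, hq, hμq⟩ := hbij.surjOn h'
    have := (key q hq).2.2.2
    rw [hμq, rho_rho] at this
    exact this
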